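/- In the abstract FEM setting, let T > 0, let f : [0,T] → H be continuous, and let u_h : [0,T] → V be twice continuously differentiable with (u_h''(t), v) + a_h(u_h(t), v) = (f(t), v) for all v ∈ V and all t ∈ [0,T]. Then for every t ∈ [0,T]: ‖u_h'(t)‖² + α ‖u_h(t)‖_h² ≤ e^T · ( ‖u_h'(0)‖² + β ‖u_h(0)‖_h² + ∫₀ᵀ ‖f(s)‖² ds ). -/

import Mathlib

open scoped RealInnerProductSpace

/-- Stability of the semidiscrete scheme in the abstract FEM setting. -/
theorem semidiscrete_stability
    {H : Type*} [NormedAddCommGroup H] [InnerProductSpace ℝ H] [CompleteSpace H]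
    (V : Submodule ℝ H) (Nh : Seminorm ℝ V) (a : V →ₗ[ℝ] V →ₗ[ℝ] ℝ)
    (α β T : ℝ) (hα : 0 < α) (hαβ : α ≤ β) (hT : 0 < T)
    (hsym : ∀ w v : V, a w v = a v w)
    (hell : ∀ w : V, α * Nh w ^ 2 ≤ a w w)
    (hbdd : ∀ w v : V, |a w v| ≤ β * Nh w * Nh v)
    (f : ℝ → H) (hf : ContinuousOn f (Set.Icc (0 : ℝ) T))
    (u u' u'' : ℝ → V)
    (hu' : ∀ t ∈ Set.Icc (0 : ℝ) T, HasDerivWithinAt u (u' t) (Set.Icc (0 : ℝ) T) t)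
    (hu'' : ∀ t ∈ Set.Icc (0 : ℝ) T, HasDerivWithinAt u' (u'' t) (Set.Icc (0 : ℝ) T) t)
    (hcont : ContinuousOn u'' (Set.Icc (0 : ℝ) T))
    (heq : ∀ t ∈ Set.Icc (0 : ℝ) T, ∀ v : V,
      ⟪((u'' t : V) : H), (v : H)⟫ + a (u t) v = ⟪f t, (v : H)⟫) :
    ∀ t ∈ Set.Icc (0 : ℝ) T,
      ‖u' t‖ ^ 2 + α * Nh (u t) ^ 2
        ≤ Real.exp T * (‖u' 0‖ ^ 2 + β * Nh (u 0) ^ 2 + ∫ s in (0 : ℝ)..T, ‖f s‖ ^ 2) := by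
  intro t ht
  have h0s : (0 : ℝ) ∈ Set.Icc (0 : ℝ) T := ⟨le_refl 0, hT.le⟩
  set g : ℝ → H := fun τ => f τ - (u'' τ : H) with hg
  -- express the bilinear form via g
  have hag : ∀ τ ∈ Set.Icc (0 : ℝ) T, ∀ v : V, (a (u τ) v : ℝ) = ⟪g τ, (v : H)⟫ := by
    intro τ hτ v
    have h := heq τ hτ v
    simp only [hg, inner_sub_left]
    linarith
  have hgc : ContinuousOn g (Set.Icc (0 : ℝ) T) :=
    hf.sub (V.subtypeL.continuous.comp_continuousOn hcont)
  have hcu : ∀ τ ∈ Set.Icc (0 : ℝ) T,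
      HasDerivWithinAt (fun x => ((u x : H))) ((u' τ : H)) (Set.Icc (0 : ℝ) T) τ := fun τ hτ =>
    V.subtypeL.hasFDerivAt.comp_hasDerivWithinAt τ (hu' τ hτ)
  have hcu' : ∀ τ ∈ Set.Icc (0 : ℝ) T,
      HasDerivWithinAt (fun x => ((u' x : H))) ((u'' τ : H)) (Set.Icc (0 : ℝ) T) τ := fun τ hτ =>
    V.subtypeL.hasFDerivAt.comp_hasDerivWithinAt τ (hu'' τ hτ)
  set E : ℝ → ℝ := fun τ => ‖(u' τ : H)‖ ^ 2 + a (u τ) (u τ) with hE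
  have haww : ∀ τ, 0 ≤ (a (u τ) (u τ) : ℝ) := fun τ =>
    le_trans (by positivity) (hell (u τ))
  -- derivative of the bilinear part, via slopes
  have hA : ∀ τ ∈ Set.Icc (0 : ℝ) T,
      HasDerivWithinAt (fun x => (a (u x) (u x) : ℝ)) (2 * ⟪g τ, (u' τ : H)⟫)
        (Set.Icc (0 : ℝ) T) τ := by
    intro τ hτ
    rw [hasDerivWithinAt_iff_tendsto_slope]
    have T1 : Filter.Tendsto (fun x => g x + g τ)
        (nhdsWithin τ (Set.Icc (0 : ℝ) T \ {τ})) (nhds (g τ + g τ)) :=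
      ((hgc τ hτ).mono_left (nhdsWithin_mono τ Set.diff_subset)).add tendsto_const_nhds
    have T2 : Filter.Tendsto (slope (fun x => ((u x : H))) τ)
        (nhdsWithin τ (Set.Icc (0 : ℝ) T \ {τ})) (nhds ((u' τ : H))) :=
      hasDerivWithinAt_iff_tendsto_slope.mp (hcu τ hτ)
    have T3 := Filter.Tendsto.inner (𝕜 := ℝ) T1 T2
    have hval : ⟪g τ + g τ, (u' τ : H)⟫ = 2 * ⟪g τ, (u' τ : H)⟫ := by
      rw [inner_add_left]; ring
    rw [hval] at T3
    refine T3.congr' ?_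
    filter_upwards [self_mem_nhdsWithin] with x hx
    have hxs : x ∈ Set.Icc (0 : ℝ) T := hx.1
    have key : (a (u x) (u x) : ℝ) - a (u τ) (u τ) = ⟪g x + g τ, (u x : H) - (u τ : H)⟫ := by
      rw [inner_add_left, inner_sub_right, inner_sub_right]
      have e1 : ⟪g x, ((u x : V) : H)⟫ = (a (u x) (u x) : ℝ) := (hag x hxs (u x)).symm
      have e2 : ⟪g x, ((u τ : V) : H)⟫ = (a (u x) (u τ) : ℝ) := (hag x hxs (u τ)).symm
      have e3 : ⟪g τ, ((u x : V) : H)⟫ = (a (u τ) (u x) : ℝ) := (hag τ hτ (u x)).symm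
      have e4 : ⟪g τ, ((u τ : V) : H)⟫ = (a (u τ) (u τ) : ℝ) := (hag τ hτ (u τ)).symm
      have esym : (a (u x) (u τ) : ℝ) = a (u τ) (u x) := hsym (u x) (u τ)
      rw [e1, e2, e3, e4]
      linarith
    rw [slope_def_module, slope_def_module, real_inner_smul_right, key, smul_eq_mul]
  -- derivative of the energy
  have hEd : ∀ τ ∈ Set.Icc (0 : ℝ) T,
      HasDerivWithinAt E (2 * ⟪f τ, (u' τ : H)⟫) (Set.Icc (0 : ℝ) T) τ := by
    intro τ hτ
    have h1 := (hcu' τ hτ).inner ℝ (hcu' τ hτ)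
    have h1' : HasDerivWithinAt (fun x => ‖(u' x : H)‖ ^ 2)
        (⟪(u' τ : H), (u'' τ : H)⟫ + ⟪(u'' τ : H), (u' τ : H)⟫) (Set.Icc (0 : ℝ) T) τ := by
      simpa only [real_inner_self_eq_norm_sq] using h1
    have h2 := h1'.add (hA τ hτ)
    convert h2 using 1
    · rfl
    · rfl
    · rfl
    simp only [hg, inner_sub_left]
    rw [real_inner_comm ((u' τ : H)) ((u'' τ : H))]
    ring
  -- the integrand and its integrability
  set φ : ℝ → ℝ := fun x => Real.exp (-x) * ‖f x‖ ^ 2 with hφ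
  have hφc : ContinuousOn φ (Set.Icc (0 : ℝ) T) :=
    ((Real.continuous_exp.comp continuous_neg).continuousOn).mul ((hf.norm).pow 2)
  have hφint : IntervalIntegrable φ MeasureTheory.volume 0 T :=
    ContinuousOn.intervalIntegrable (by rwa [Set.uIcc_of_le hT.le])
  have hfsqc : ContinuousOn (fun x => ‖f x‖ ^ 2) (Set.Icc (0 : ℝ) T) := (hf.norm).pow 2
  have hfint : IntervalIntegrable (fun x => ‖f x‖ ^ 2) MeasureTheory.volume 0 T :=
    ContinuousOn.intervalIntegrable (by rwa [Set.uIcc_of_le hT.le])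
  -- Gronwall function
  set ψ : ℝ → ℝ := fun x => Real.exp (-x) * E x - ∫ y in (0 : ℝ)..x, φ y with hψ
  have hψd : ∀ τ ∈ Set.Icc (0 : ℝ) T,
      HasDerivWithinAt ψ
        (Real.exp (-τ) * -1 * E τ + Real.exp (-τ) * (2 * ⟪f τ, (u' τ : H)⟫) - φ τ)
        (Set.Icc (0 : ℝ) T) τ := by
    intro τ hτ
    have hexp : HasDerivWithinAt (fun x => Real.exp (-x)) (Real.exp (-τ) * -1)
        (Set.Icc (0 : ℝ) T) τ := ((hasDerivAt_neg τ).exp).hasDerivWithinAt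
    have hmul := hexp.mul (hEd τ hτ)
    have hsub : Set.uIcc (0 : ℝ) τ ⊆ Set.uIcc (0 : ℝ) T := by
      rw [Set.uIcc_of_le hτ.1, Set.uIcc_of_le hT.le]
      exact Set.Icc_subset_Icc le_rfl hτ.2
    have hint : HasDerivWithinAt (fun x => ∫ y in (0 : ℝ)..x, φ y) (φ τ)
        (Set.Icc (0 : ℝ) T) τ := by
      haveI : Fact (τ ∈ Set.Icc (0 : ℝ) T) := ⟨hτ⟩
      exact intervalIntegral.integral_hasDerivWithinAt_right
        (hφint.mono_set hsub)
        (hφc.stronglyMeasurableAtFilter_nhdsWithin measurableSet_Icc τ)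
        (hφc τ hτ)
    exact hmul.sub hint
  have hψc : ContinuousOn ψ (Set.Icc (0 : ℝ) T) := fun τ hτ => (hψd τ hτ).continuousWithinAt
  have hanti : AntitoneOn ψ (Set.Icc (0 : ℝ) T) := by
    apply antitoneOn_of_deriv_nonpos (convex_Icc 0 T) hψc
    · intro x hx
      rw [interior_Icc] at hx
      exact ((hψd x (Set.Ioo_subset_Icc_self hx)).hasDerivAt
        (Icc_mem_nhds hx.1 hx.2)).differentiableAt.differentiableWithinAt
    · intro x hx
      rw [interior_Icc] at hx
      have hx' := Set.Ioo_subset_Icc_self hx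
      rw [((hψd x hx').hasDerivAt (Icc_mem_nhds hx.1 hx.2)).deriv]
      have h1 : 2 * ⟪f x, (u' x : H)⟫ ≤ ‖f x‖ ^ 2 + ‖(u' x : H)‖ ^ 2 := by
        have hc := real_inner_le_norm (f x) ((u' x : H))
        nlinarith [sq_nonneg (‖f x‖ - ‖(u' x : H)‖)]
      have h2 : ‖(u' x : H)‖ ^ 2 ≤ E x := by
        have := haww x
        simp only [hE]
        linarith
      have h3 : (0 : ℝ) < Real.exp (-x) := Real.exp_pos _
      simp only [hφ]
      nlinarith [mul_nonneg h3.le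
        (show (0 : ℝ) ≤ ‖f x‖ ^ 2 + E x - 2 * ⟪f x, (u' x : H)⟫ by linarith)]
  have key : ψ t ≤ ψ 0 := hanti h0s ht ht.1
  have hψ0 : ψ 0 = E 0 := by
    simp [hψ]
  -- bound the integral
  have hφt : IntervalIntegrable φ MeasureTheory.volume 0 t := by
    apply hφint.mono_set
    rw [Set.uIcc_of_le ht.1, Set.uIcc_of_le hT.le]
    exact Set.Icc_subset_Icc le_rfl ht.2
  have hft : IntervalIntegrable (fun x => ‖f x‖ ^ 2) MeasureTheory.volume 0 t := by
    apply hfint.mono_set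
    rw [Set.uIcc_of_le ht.1, Set.uIcc_of_le hT.le]
    exact Set.Icc_subset_Icc le_rfl ht.2
  have hint1 : (∫ y in (0 : ℝ)..t, φ y) ≤ ∫ y in (0 : ℝ)..t, ‖f y‖ ^ 2 := by
    apply intervalIntegral.integral_mono_on ht.1 hφt hft
    intro x hx
    have h1 : Real.exp (-x) ≤ 1 := by
      rw [Real.exp_le_one_iff]
      linarith [hx.1]
    simp only [hφ]
    exact mul_le_of_le_one_left (sq_nonneg _) h1
  have hint2 : (∫ y in (0 : ℝ)..t, ‖f y‖ ^ 2) ≤ ∫ y in (0 : ℝ)..T, ‖f y‖ ^ 2 := by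
    apply intervalIntegral.integral_mono_interval le_rfl ht.1 ht.2
      (Filter.Eventually.of_forall fun x => sq_nonneg _) hfint
  -- assemble the Gronwall bound
  have hEt : E t ≤ Real.exp t * (E 0 + ∫ y in (0 : ℝ)..T, ‖f y‖ ^ 2) := by
    have h1 : Real.exp (-t) * E t ≤ E 0 + ∫ y in (0 : ℝ)..t, φ y := by
      have := key
      rw [hψ0] at this
      simp only [hψ] at this
      linarith
    have h2 : Real.exp (-t) * E t ≤ E 0 + ∫ y in (0 : ℝ)..T, ‖f y‖ ^ 2 := by linarith
    have h3 := mul_le_mul_of_nonneg_left h2 (Real.exp_pos t).le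
    rwa [← mul_assoc, ← Real.exp_add, add_neg_cancel, Real.exp_zero, one_mul] at h3
  have hIT : 0 ≤ ∫ y in (0 : ℝ)..T, ‖f y‖ ^ 2 :=
    intervalIntegral.integral_nonneg hT.le fun x _ => sq_nonneg _
  have hE0 : 0 ≤ E 0 := by
    have := haww 0
    simp only [hE]
    positivity
  have hexpT : Real.exp t ≤ Real.exp T := Real.exp_le_exp.mpr ht.2
  have hEt' : E t ≤ Real.exp T * (E 0 + ∫ y in (0 : ℝ)..T, ‖f y‖ ^ 2) :=
    hEt.trans (mul_le_mul_of_nonneg_right hexpT (by linarith))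
  have hl : ‖u' t‖ ^ 2 + α * Nh (u t) ^ 2 ≤ E t := by
    have h := hell (u t)
    have hn : ‖u' t‖ = ‖(u' t : H)‖ := rfl
    simp only [hE, hn]
    linarith
  have hr : E 0 ≤ ‖u' 0‖ ^ 2 + β * Nh (u 0) ^ 2 := by
    have h1 := hbdd (u 0) (u 0)
    have h2 := le_abs_self ((a (u 0)) (u 0))
    have hn : ‖u' 0‖ = ‖(u' 0 : H)‖ := rfl
    have hsq : Nh (u 0) ^ 2 = Nh (u 0) * Nh (u 0) := pow_two (Nh (u 0))
    simp only [hE, hn]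
    nlinarith
  calc ‖u' t‖ ^ 2 + α * Nh (u t) ^ 2 ≤ E t := hl
    _ ≤ Real.exp T * (E 0 + ∫ y in (0 : ℝ)..T, ‖f y‖ ^ 2) := hEt'
    _ ≤ Real.exp T * (‖u' 0‖ ^ 2 + β * Nh (u 0) ^ 2 + ∫ s in (0 : ℝ)..T, ‖f s‖ ^ 2) := by
        apply mul_le_mul_of_nonneg_left _ (Real.exp_pos T).le
        linarith
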